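/- Let Y be a centered random vector on ℝ^d with law μ_Y and E‖Y‖² < ∞, and ν a Lévy measure with ∫_{‖u‖≥1}‖u‖²ν(du) < ∞ and ν∗μ_Y ≪ μ_Y. Let H_ν(μ_Y) be the space of measurable f : ℝ^d → ℝ^d with ∫‖f(y)‖²μ_Y(dy) < ∞ and ∫∫‖f(y+u)−f(y)‖²ν(du)μ_Y(dy) < ∞, with inner product ⟨f,g⟩ = E⟨f(Y),g(Y)⟩ + A(f,g), where A(f,g) = E∫⟨f(Y+u)−f(Y), g(Y+u)−g(Y)⟩ν(du). Then H_ν(μ_Y) is a Hilbert space (it is complete for the induced norm). -/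

import Mathlib

open MeasureTheory
open scoped RealInnerProductSpace ENNReal

/-- Convolution of a (Lévy) measure `ν` with a probability measure `μ` on `ℝ^d`:
`(ν ∗ μ)(B) = ∫∫ 1_B(u + y) ν(du) μ(dy)`. -/
noncomputable def convMeas {d : ℕ} (ν μ : Measure (EuclideanSpace ℝ (Fin d))) :
    Measure (EuclideanSpace ℝ (Fin d)) :=
  (ν.prod μ).map (fun p => p.1 + p.2)

/-- Membership in the space `H_ν(μY)`: Borel measurable `f : ℝ^d → ℝ^d` with
`∫‖f(y)‖² μY(dy) < ∞` and `∫∫‖f(y+u) - f(y)‖² ν(du) μY(dy) < ∞`. -/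
def memHnu {d : ℕ} (ν μY : Measure (EuclideanSpace ℝ (Fin d)))
    (f : EuclideanSpace ℝ (Fin d) → EuclideanSpace ℝ (Fin d)) : Prop :=
  Measurable f ∧ Integrable (fun y => ‖f y‖ ^ 2) μY ∧
    Integrable (fun p : EuclideanSpace ℝ (Fin d) × EuclideanSpace ℝ (Fin d) =>
      ‖f (p.2 + p.1) - f p.2‖ ^ 2) (ν.prod μY)

/-- The bilinear functional `A(f,g) = E ∫ ⟨f(Y+u) - f(Y), g(Y+u) - g(Y)⟩ ν(du)`. -/
noncomputable def bilinA {d : ℕ} (ν μY : Measure (EuclideanSpace ℝ (Fin d)))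
    (f g : EuclideanSpace ℝ (Fin d) → EuclideanSpace ℝ (Fin d)) : ℝ :=
  ∫ p : EuclideanSpace ℝ (Fin d) × EuclideanSpace ℝ (Fin d),
    (⟪f (p.2 + p.1) - f p.2, g (p.2 + p.1) - g p.2⟫ : ℝ) ∂(ν.prod μY)

/-- The norm of `H_ν(μY)` induced by the inner product
`⟨f,g⟩ = E⟨f(Y), g(Y)⟩ + A(f,g)`. -/
noncomputable def hnuNorm {d : ℕ} (ν μY : Measure (EuclideanSpace ℝ (Fin d)))
    (f : EuclideanSpace ℝ (Fin d) → EuclideanSpace ℝ (Fin d)) : ℝ :=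
  Real.sqrt ((∫ y, ‖f y‖ ^ 2 ∂μY) + bilinA ν μY f f)

/- ### Auxiliary material -/

open Filter

/-- The "increment" operator `D f (u, y) = f (y + u) - f y`. -/
noncomputable def Dop {d : ℕ} (f : EuclideanSpace ℝ (Fin d) → EuclideanSpace ℝ (Fin d)) :
    EuclideanSpace ℝ (Fin d) × EuclideanSpace ℝ (Fin d) → EuclideanSpace ℝ (Fin d) :=
  fun p => f (p.2 + p.1) - f p.2

lemma Dop_sub {d : ℕ} (f g : EuclideanSpace ℝ (Fin d) → EuclideanSpace ℝ (Fin d)) :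
    Dop (f - g) = Dop f - Dop g := by
  funext p
  simp only [Dop, Pi.sub_apply]
  abel

/-- `∫ ‖h‖² = ((eLpNorm h 2 μ).toReal)²` (both sides vanish in the degenerate case). -/
lemma integral_sq_norm_eq {α : Type*} [MeasurableSpace α] (μ : Measure α) {G : Type*}
    [NormedAddCommGroup G] (h : α → G) (hm : AEStronglyMeasurable h μ) :
    ∫ x, ‖h x‖ ^ 2 ∂μ = (eLpNorm h 2 μ).toReal ^ 2 := by
  have h1 : ∫ x, ‖h x‖ ^ 2 ∂μ = (∫⁻ x, ENNReal.ofReal (‖h x‖ ^ 2) ∂μ).toReal :=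
    integral_eq_lintegral_of_nonneg_ae (Filter.Eventually.of_forall fun x => sq_nonneg _)
      ((hm.norm.aemeasurable.pow_const 2).aestronglyMeasurable)
  have h2 : ∀ x, ENNReal.ofReal (‖h x‖ ^ 2) = (‖h x‖₊ : ℝ≥0∞) ^ (2 : ℝ) := fun x => by
    rw [ENNReal.ofReal_pow (norm_nonneg _), ofReal_norm, enorm_eq_nnnorm,
      ← ENNReal.rpow_natCast]
    norm_num
  have h3 : eLpNorm h 2 μ = (∫⁻ x, (‖h x‖₊ : ℝ≥0∞) ^ (2 : ℝ) ∂μ) ^ (1 / 2 : ℝ) := by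
    rw [eLpNorm_eq_lintegral_rpow_enorm_toReal two_ne_zero ENNReal.ofNat_ne_top]
    simp only [enorm_eq_nnnorm]
    norm_num
  rw [h1, h3]
  simp_rw [h2]
  set X := ∫⁻ x, (‖h x‖₊ : ℝ≥0∞) ^ (2 : ℝ) ∂μ with hX
  rw [← ENNReal.toReal_rpow, ← Real.rpow_natCast (X.toReal ^ (1 / 2 : ℝ)) 2,
    ← Real.rpow_mul ENNReal.toReal_nonneg]
  norm_num

/-- Transfer a `μY`-null set to a `ν.prod μY`-null set of the map `p ↦ p.2 + p.1`,
using absolute continuity of the convolution. -/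
lemma null_transfer {d : ℕ} (ν μY : Measure (EuclideanSpace ℝ (Fin d)))
    (habs : convMeas ν μY ≪ μY) {s : Set (EuclideanSpace ℝ (Fin d))} (hs : μY s = 0) :
    (ν.prod μY) {p | p.2 + p.1 ∈ s} = 0 := by
  set t := toMeasurable μY s with ht_def
  have ht : μY t = 0 := by rwa [measure_toMeasurable]
  have h1 : convMeas ν μY t = 0 := habs ht
  have h2 : (ν.prod μY)
      ((fun p : EuclideanSpace ℝ (Fin d) × EuclideanSpace ℝ (Fin d) => p.1 + p.2) ⁻¹' t) = 0 := by
    rw [convMeas, Measure.map_apply (f := fun p : EuclideanSpace ℝ (Fin d) × EuclideanSpace ℝ (Fin d) => p.1 + p.2) (by fun_prop)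
      (measurableSet_toMeasurable μY s)] at h1
    exact h1
  refine measure_mono_null (fun p hp => ?_) h2
  simp only [Set.mem_preimage]
  rw [add_comm]
  exact subset_toMeasurable μY s hp

lemma ae_transfer {d : ℕ} (ν μY : Measure (EuclideanSpace ℝ (Fin d)))
    (habs : convMeas ν μY ≪ μY) {P : EuclideanSpace ℝ (Fin d) → Prop}
    (h : ∀ᵐ y ∂μY, P y) : ∀ᵐ p ∂(ν.prod μY), P (p.2 + p.1) := by
  rw [ae_iff] at h ⊢
  exact null_transfer ν μY habs h

lemma ae_snd_transfer {d : ℕ} (ν μY : Measure (EuclideanSpace ℝ (Fin d)))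
    [SigmaFinite μY] {P : EuclideanSpace ℝ (Fin d) → Prop}
    (h : ∀ᵐ y ∂μY, P y) : ∀ᵐ p ∂(ν.prod μY), P p.2 := by
  rw [ae_iff] at h ⊢
  set t := toMeasurable μY {y | ¬ P y} with ht_def
  have ht : μY t = 0 := by rwa [measure_toMeasurable]
  have h2 : (ν.prod μY) (Set.univ ×ˢ t) = 0 := by
    rw [Measure.prod_prod, ht, mul_zero]
  refine measure_mono_null (fun p hp => ?_) h2
  exact ⟨Set.mem_univ _, subset_toMeasurable _ _ hp⟩

/-- the norm of `H_ν(μY)` in terms of `eLpNorm`s. -/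
lemma hnuNorm_eq_sqrt {d : ℕ} (ν μY : Measure (EuclideanSpace ℝ (Fin d)))
    (h : EuclideanSpace ℝ (Fin d) → EuclideanSpace ℝ (Fin d))
    (h1 : AEStronglyMeasurable h μY) (h2 : AEStronglyMeasurable (Dop h) (ν.prod μY)) :
    hnuNorm ν μY h =
      Real.sqrt ((eLpNorm h 2 μY).toReal ^ 2 + (eLpNorm (Dop h) 2 (ν.prod μY)).toReal ^ 2) := by
  rw [hnuNorm]
  congr 1
  rw [integral_sq_norm_eq μY h h1]
  congr 1
  rw [bilinA]
  simp_rw [real_inner_self_eq_norm_sq]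
  exact integral_sq_norm_eq (ν.prod μY) (Dop h) h2

/-- Let `Y` be a centered random vector with `E‖Y‖² < ∞`, and `ν` a Lévy measure
with `∫_{‖u‖≥1}‖u‖² ν(du) < ∞` and `ν ∗ μY ≪ μY`.  Then `H_ν(μY)`, with the inner product
`⟨f,g⟩ = E⟨f(Y),g(Y)⟩ + A(f,g)` (functions identified `μY`-a.e.), is a Hilbert space: every
Cauchy sequence for the induced norm converges in the space. -/
theorem Hnu_complete (d : ℕ) (ν μY : Measure (EuclideanSpace ℝ (Fin d)))
    (hprobY : IsProbabilityMeasure μY)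
    (hcentY : ∫ y, y ∂μY = 0)
    (hmom2Y : Integrable (fun y => ‖y‖ ^ 2) μY)
    (hsf : SigmaFinite ν)
    (hzero : ν {0} = 0)
    (hlevy : ∫⁻ u, ENNReal.ofReal (min 1 (‖u‖ ^ 2)) ∂ν < ⊤)
    (hbig : IntegrableOn (fun u => ‖u‖ ^ 2) {u : EuclideanSpace ℝ (Fin d) | 1 ≤ ‖u‖} ν)
    (habs : convMeas ν μY ≪ μY) :
    ∀ f : ℕ → EuclideanSpace ℝ (Fin d) → EuclideanSpace ℝ (Fin d),
      (∀ n, memHnu ν μY (f n)) →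
      (∀ ε : ℝ, 0 < ε → ∃ N : ℕ, ∀ m n : ℕ, N ≤ m → N ≤ n →
        hnuNorm ν μY (f m - f n) < ε) →
      ∃ g : EuclideanSpace ℝ (Fin d) → EuclideanSpace ℝ (Fin d), memHnu ν μY g ∧
        Filter.Tendsto (fun n => hnuNorm ν μY (f n - g)) Filter.atTop (nhds 0) := by
  intro f hmem hcauchy
  haveI := hprobY
  haveI := hsf
  set π := ν.prod μY with hπ
  -- basic measurability / integrability facts
  have hmeas : ∀ n, Measurable (f n) := fun n => (hmem n).1
  have hL2 : ∀ n, MemLp (f n) 2 μY := fun n =>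
    (memLp_two_iff_integrable_sq_norm (hmeas n).aestronglyMeasurable).2 (hmem n).2.1
  have hDmeas : ∀ h : EuclideanSpace ℝ (Fin d) → EuclideanSpace ℝ (Fin d),
      Measurable h → Measurable (Dop h) := fun h hh =>
    (hh.comp (measurable_snd.add measurable_fst)).sub (hh.comp measurable_snd)
  have hDL2 : ∀ n, MemLp (Dop (f n)) 2 π := fun n =>
    (memLp_two_iff_integrable_sq_norm (hDmeas (f n) (hmeas n)).aestronglyMeasurable).2
      (hmem n).2.2
  -- the two eLpNorm components are bounded by the H-norm
  have hbound : ∀ m n : ℕ,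
      (eLpNorm (f m - f n) 2 μY).toReal ≤ hnuNorm ν μY (f m - f n) ∧
      (eLpNorm (Dop (f m) - Dop (f n)) 2 π).toReal ≤ hnuNorm ν μY (f m - f n) := by
    intro m n
    have hsub : MemLp (f m - f n) 2 μY := (hL2 m).sub (hL2 n)
    have hDsub : MemLp (Dop (f m - f n)) 2 π := by
      rw [Dop_sub]; exact (hDL2 m).sub (hDL2 n)
    have heq := hnuNorm_eq_sqrt ν μY (f m - f n) hsub.1 hDsub.1
    rw [Dop_sub] at heq
    constructor
    · rw [heq]
      calc (eLpNorm (f m - f n) 2 μY).toReal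
          = Real.sqrt ((eLpNorm (f m - f n) 2 μY).toReal ^ 2) := by
            rw [Real.sqrt_sq ENNReal.toReal_nonneg]
        _ ≤ _ := Real.sqrt_le_sqrt (le_add_of_nonneg_right (sq_nonneg _))
    · rw [heq]
      calc (eLpNorm (Dop (f m) - Dop (f n)) 2 π).toReal
          = Real.sqrt ((eLpNorm (Dop (f m) - Dop (f n)) 2 π).toReal ^ 2) := by
            rw [Real.sqrt_sq ENNReal.toReal_nonneg]
        _ ≤ _ := Real.sqrt_le_sqrt (le_add_of_nonneg_left (sq_nonneg _))
  -- Cauchy sequences in the two L² spaces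
  let u : ℕ → Lp (EuclideanSpace ℝ (Fin d)) 2 μY := fun n => (hL2 n).toLp (f n)
  let v : ℕ → Lp (EuclideanSpace ℝ (Fin d)) 2 π := fun n => (hDL2 n).toLp (Dop (f n))
  have hdist_u : ∀ m n, dist (u m) (u n) = (eLpNorm (f m - f n) 2 μY).toReal := by
    intro m n
    rw [dist_eq_norm]
    show ‖(hL2 m).toLp (f m) - (hL2 n).toLp (f n)‖ = _
    rw [← MemLp.toLp_sub, Lp.norm_toLp]
  have hdist_v : ∀ m n, dist (v m) (v n) = (eLpNorm (Dop (f m) - Dop (f n)) 2 π).toReal := by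
    intro m n
    rw [dist_eq_norm]
    show ‖(hDL2 m).toLp (Dop (f m)) - (hDL2 n).toLp (Dop (f n))‖ = _
    rw [← MemLp.toLp_sub, Lp.norm_toLp]
  have hu_cauchy : CauchySeq u := by
    refine Metric.cauchySeq_iff.2 fun ε hε => ?_
    obtain ⟨N, hN⟩ := hcauchy ε hε
    exact ⟨N, fun m hm n hn => by
      rw [hdist_u]; exact lt_of_le_of_lt (hbound m n).1 (hN m n hm hn)⟩
  have hv_cauchy : CauchySeq v := by
    refine Metric.cauchySeq_iff.2 fun ε hε => ?_
    obtain ⟨N, hN⟩ := hcauchy ε hε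
    exact ⟨N, fun m hm n hn => by
      rw [hdist_v]; exact lt_of_le_of_lt (hbound m n).2 (hN m n hm hn)⟩
  obtain ⟨G, hG⟩ := cauchySeq_tendsto_of_complete hu_cauchy
  obtain ⟨H, hH⟩ := cauchySeq_tendsto_of_complete hv_cauchy
  set g : EuclideanSpace ℝ (Fin d) → EuclideanSpace ℝ (Fin d) := ⇑G with hg_def
  set h : EuclideanSpace ℝ (Fin d) × EuclideanSpace ℝ (Fin d) → EuclideanSpace ℝ (Fin d) :=
    ⇑H with hh_def
  have hgL2 : MemLp g 2 μY := Lp.memLp G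
  have hhL2 : MemLp h 2 π := Lp.memLp H
  -- distances to the limits, as eLpNorms of plain functions
  have hud : ∀ n, dist (u n) G = (eLpNorm (f n - g) 2 μY).toReal := by
    intro n
    rw [Lp.dist_def]
    exact congrArg ENNReal.toReal
      (eLpNorm_congr_ae (((hL2 n).coeFn_toLp).sub (Filter.EventuallyEq.refl _ _)))
  have hvd : ∀ n, dist (v n) H = (eLpNorm (Dop (f n) - h) 2 π).toReal := by
    intro n
    rw [Lp.dist_def]
    exact congrArg ENNReal.toReal
      (eLpNorm_congr_ae (((hDL2 n).coeFn_toLp).sub (Filter.EventuallyEq.refl _ _)))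
  have hgd : Tendsto (fun n => (eLpNorm (f n - g) 2 μY).toReal) atTop (nhds 0) := by
    have := (tendsto_iff_dist_tendsto_zero.1 hG)
    exact this.congr fun n => hud n
  have hhd : Tendsto (fun n => (eLpNorm (Dop (f n) - h) 2 π).toReal) atTop (nhds 0) := by
    have := (tendsto_iff_dist_tendsto_zero.1 hH)
    exact this.congr fun n => hvd n
  -- ENNReal versions
  have hgd' : Tendsto (fun n => eLpNorm (f n - g) 2 μY) atTop (nhds 0) := by
    have h0 := ENNReal.tendsto_ofReal hgd
    rw [ENNReal.ofReal_zero] at h0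
    refine h0.congr fun n => ?_
    rw [ENNReal.ofReal_toReal ((hL2 n).sub hgL2).eLpNorm_ne_top]
  have hhd' : Tendsto (fun n => eLpNorm (Dop (f n) - h) 2 π) atTop (nhds 0) := by
    have h0 := ENNReal.tendsto_ofReal hhd
    rw [ENNReal.ofReal_zero] at h0
    refine h0.congr fun n => ?_
    rw [ENNReal.ofReal_toReal ((hDL2 n).sub hhL2).eLpNorm_ne_top]
  -- a.e. convergent subsequences
  have htm1 : TendstoInMeasure μY f atTop g :=
    tendstoInMeasure_of_tendsto_eLpNorm two_ne_zero
      (fun n => (hL2 n).1) hgL2.1 hgd'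
  obtain ⟨ns, hns_mono, hns_ae⟩ := htm1.exists_seq_tendsto_ae
  have htm2 : TendstoInMeasure π (fun k => Dop (f (ns k))) atTop h :=
    tendstoInMeasure_of_tendsto_eLpNorm two_ne_zero
      (fun k => (hDL2 (ns k)).1) hhL2.1 (hhd'.comp hns_mono.tendsto_atTop)
  obtain ⟨ms, hms_mono, hms_ae⟩ := htm2.exists_seq_tendsto_ae
  set φ : ℕ → ℕ := fun k => ns (ms k) with hφ_def
  have hφ_ae_g : ∀ᵐ y ∂μY, Tendsto (fun k => f (φ k) y) atTop (nhds (g y)) :=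
    hns_ae.mono fun y hy => hy.comp hms_mono.tendsto_atTop
  have hφ_ae_h : ∀ᵐ p ∂π, Tendsto (fun k => Dop (f (φ k)) p) atTop (nhds (h p)) := hms_ae
  -- identify h with Dop g a.e.
  have h1 : ∀ᵐ p ∂π, Tendsto (fun k => f (φ k) (p.2 + p.1)) atTop (nhds (g (p.2 + p.1))) :=
    ae_transfer ν μY habs hφ_ae_g
  have h2 : ∀ᵐ p ∂π, Tendsto (fun k => f (φ k) p.2) atTop (nhds (g p.2)) :=
    ae_snd_transfer ν μY hφ_ae_g
  have hDg_ae : ∀ᵐ p ∂π, Tendsto (fun k => Dop (f (φ k)) p) atTop (nhds (Dop g p)) :=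
    (h1.and h2).mono fun p hp => hp.1.sub hp.2
  have hHg : h =ᵐ[π] Dop g :=
    (hφ_ae_h.and hDg_ae).mono fun p hp => tendsto_nhds_unique hp.1 hp.2
  -- measurable representative
  set g' : EuclideanSpace ℝ (Fin d) → EuclideanSpace ℝ (Fin d) := hgL2.1.mk g with hg'_def
  have hg'_meas : Measurable g' := hgL2.1.stronglyMeasurable_mk.measurable
  have hgg' : g =ᵐ[μY] g' := hgL2.1.ae_eq_mk
  have hDgg' : Dop g =ᵐ[π] Dop g' := by
    have t1 : ∀ᵐ p ∂π, g (p.2 + p.1) = g' (p.2 + p.1) := ae_transfer ν μY habs hgg'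
    have t2 : ∀ᵐ p ∂π, g p.2 = g' p.2 := ae_snd_transfer ν μY hgg'
    exact (t1.and t2).mono fun p hp => by simp only [Dop, hp.1, hp.2]
  have hHg' : h =ᵐ[π] Dop g' := hHg.trans hDgg'
  have hg'L2 : MemLp g' 2 μY := (memLp_congr_ae hgg').1 hgL2
  have hDg'L2 : MemLp (Dop g') 2 π := (memLp_congr_ae hHg').1 hhL2
  refine ⟨g', ⟨hg'_meas, ?_, ?_⟩, ?_⟩
  · exact (memLp_two_iff_integrable_sq_norm hg'_meas.aestronglyMeasurable).1 hg'L2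
  · exact (memLp_two_iff_integrable_sq_norm
      (hDmeas g' hg'_meas).aestronglyMeasurable).1 hDg'L2
  · -- convergence in the H-norm
    have hkey : ∀ n, hnuNorm ν μY (f n - g') =
        Real.sqrt ((eLpNorm (f n - g) 2 μY).toReal ^ 2 +
          (eLpNorm (Dop (f n) - h) 2 π).toReal ^ 2) := by
      intro n
      have hs1 : MemLp (f n - g') 2 μY := (hL2 n).sub hg'L2
      have hs2 : MemLp (Dop (f n - g')) 2 π := by
        rw [Dop_sub]; exact (hDL2 n).sub hDg'L2
      have e1 : eLpNorm (f n - g') 2 μY = eLpNorm (f n - g) 2 μY :=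
        eLpNorm_congr_ae ((Filter.EventuallyEq.refl (ae μY) (f n)).sub hgg'.symm)
      have e2 : eLpNorm (Dop (f n - g')) 2 π = eLpNorm (Dop (f n) - h) 2 π := by
        rw [Dop_sub]
        exact eLpNorm_congr_ae ((Filter.EventuallyEq.refl (ae π) (Dop (f n))).sub hHg'.symm)
      rw [hnuNorm_eq_sqrt ν μY (f n - g') hs1.1 hs2.1, e1, e2]
    have hsum : Tendsto (fun n => (eLpNorm (f n - g) 2 μY).toReal ^ 2 +
        (eLpNorm (Dop (f n) - h) 2 π).toReal ^ 2) atTop (nhds 0) := by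
      have ha := hgd.pow 2
      have hb := hhd.pow 2
      simpa using ha.add hb
    have hfinal := (Real.continuous_sqrt.tendsto 0).comp hsum
    simp only [Real.sqrt_zero] at hfinal
    exact hfinal.congr fun n => (hkey n).symm
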